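/- Let X be an obtuse random variable in ℂ^N with values vᵢ and probabilities pᵢ, and extend with X⁰ ≡ 1. Define S^{ij}_k = E[X^i X^j conj(X^k)] for i,j,k = 0,…,N. Then X^i X^j = Σ_{k=0}^N S^{ij}_k X^k holds pointwise (i.e. for every ω ∈ Ω). -/

import Mathlib

/-- for an obtuse random variable `X` in `ℂ^N` (on the canonical
space `Ω = Fin (N+1)` with `P({ω}) = p_ω = 1/(1+‖v_ω‖²)`, `X^0 ≡ 1` and
`X^{j+1}(ω) = v_ω^j`), and `S^{ij}_k = E[X^i X^j conj(X^k)]`, the relation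
`X^i X^j = ∑_k S^{ij}_k X^k` holds pointwise. -/
theorem stmt14 {N : ℕ} (v : Fin (N + 1) → EuclideanSpace ℂ (Fin N))
    (hv : ∀ i j, i ≠ j → (inner ℂ (v i) (v j) : ℂ) = -1)
    (X : Fin (N + 1) → Fin (N + 1) → ℂ)
    (hX0 : ∀ ω, X 0 ω = 1)
    (hXs : ∀ (j : Fin N) (ω), X j.succ ω = v ω j) :
    ∀ (i j : Fin (N + 1)) (ω : Fin (N + 1)),
      X i ω * X j ω =
        ∑ k, (∑ ω', ((1 / (1 + ‖v ω'‖ ^ 2) : ℝ) : ℂ) *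
            (X i ω' * X j ω' * (starRingEnd ℂ) (X k ω'))) * X k ω := by
  intro i j ω
  have key : ∀ ω' : Fin (N + 1), (∑ k, X k ω * (starRingEnd ℂ) (X k ω')) =
      1 + (inner ℂ (v ω') (v ω) : ℂ) := by
    intro ω'
    rw [Fin.sum_univ_succ, hX0, hX0, PiLp.inner_apply]
    simp only [hXs, RCLike.inner_apply, map_one, one_mul]
  have step1 : (∑ k, (∑ ω', ((1 / (1 + ‖v ω'‖ ^ 2) : ℝ) : ℂ) *
        (X i ω' * X j ω' * (starRingEnd ℂ) (X k ω'))) * X k ω)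
      = ∑ ω', ((1 / (1 + ‖v ω'‖ ^ 2) : ℝ) : ℂ) * (X i ω' * X j ω') *
          (∑ k, X k ω * (starRingEnd ℂ) (X k ω')) := by
    simp_rw [Finset.sum_mul, Finset.mul_sum]
    rw [Finset.sum_comm]
    exact Finset.sum_congr rfl fun ω' _ => Finset.sum_congr rfl fun k _ => by ring
  rw [step1]
  simp_rw [key]
  rw [Finset.sum_eq_single ω]
  · have h1 : (inner ℂ (v ω) (v ω) : ℂ) = ((‖v ω‖ ^ 2 : ℝ) : ℂ) := by
      rw [inner_self_eq_norm_sq_to_K]; norm_cast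
    rw [h1]
    have hne : (1 + ‖v ω‖ ^ 2 : ℝ) ≠ 0 := by positivity
    have hneC : ((1 + ‖v ω‖ ^ 2 : ℝ) : ℂ) ≠ 0 := by exact_mod_cast hne
    push_cast at hneC ⊢
    field_simp
  · intro ω' _ hne
    rw [hv ω' ω hne]
    ring
  · intro h; exact absurd (Finset.mem_univ ω) h
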